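/- Fix ξ ∈ [0, π/2] and define for θ ∈ [0, π]: h_±(ξ,θ) := sin²θ·(3 + sin ξ)² + (5·cos ξ ± 4·cos θ)², and q(ξ,θ) := sqrt(h₊) + sqrt(h₋). Then q(ξ,θ) ≤ (5/2)·sqrt 22 for all ξ ∈ [0, π/2] and θ ∈ [0, π], with equality when θ = π/2 and ξ = arcsin(1/8). -/
import Mathlib


noncomputable def hpm (ε ξ θ : ℝ) : ℝ :=
  Real.sin θ^2 * (3 + Real.sin ξ)^2 + (5*Real.cos ξ + ε*(4*Real.cos θ))^2

noncomputable def q (ξ θ : ℝ) : ℝ := Real.sqrt (hpm 1 ξ θ) + Real.sqrt (hpm (-1) ξ θ)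

lemma key (s c u : ℝ) (hs0 : 0 ≤ s) (hs1 : s ≤ 1) (hc : 0 ≤ c)
    (hcs : c^2 = 1 - s^2) (hu : u^2 ≤ 1) :
    Real.sqrt ((1-u^2)*(3+s)^2 + (5*c+4*u)^2) +
      Real.sqrt ((1-u^2)*(3+s)^2 + (5*c-4*u)^2) ≤ (5/2)*Real.sqrt 22 := by
  have hu0 : (0:ℝ) ≤ 1 - u^2 := by linarith
  set a := (1-u^2)*(3+s)^2 + (5*c+4*u)^2 with ha
  set b := (1-u^2)*(3+s)^2 + (5*c-4*u)^2 with hb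
  have ha0 : 0 ≤ a := by positivity
  have hb0 : 0 ≤ b := by positivity
  have hucu : u^2 * c^2 = u^2 * (1 - s^2) := by rw [hcs]
  have hF : a + b ≤ 275/4 + (a-b)^2/275 := by
    rw [ha, hb]
    nlinarith [sq_nonneg (s - 1/8),
      mul_nonneg (sq_nonneg u) (mul_nonneg (by linarith : (0:ℝ) ≤ 39*s+17)
        (by linarith : (0:ℝ) ≤ 1 - s)), hucu, hcs]
  have hab : a + b ≤ 275/2 := by
    rw [ha, hb]
    nlinarith [mul_le_mul_of_nonneg_left (by nlinarith : (3+s)^2 ≤ 16) hu0,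
      hcs, sq_nonneg u]
  have hsab : Real.sqrt a * Real.sqrt b ≤ 275/4 - (a+b)/2 := by
    rw [← Real.sqrt_mul ha0 b]
    have h2 : a * b ≤ (275/4 - (a+b)/2)^2 := by nlinarith [sq_nonneg (a-b)]
    calc Real.sqrt (a*b) ≤ Real.sqrt ((275/4 - (a+b)/2)^2) := Real.sqrt_le_sqrt h2
      _ = |275/4 - (a+b)/2| := Real.sqrt_sq_eq_abs _
      _ = 275/4 - (a+b)/2 := abs_of_nonneg (by linarith)
  have hgoal : Real.sqrt a + Real.sqrt b ≤ Real.sqrt (275/2) := by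
    rw [Real.le_sqrt (by positivity) (by norm_num)]
    have e1 := Real.sq_sqrt ha0
    have e2 := Real.sq_sqrt hb0
    nlinarith [hsab, e1, e2]
  have hfin : Real.sqrt (275/2) = (5/2)*Real.sqrt 22 := by
    rw [show (275:ℝ)/2 = (5/2)^2 * 22 by norm_num, Real.sqrt_mul (by positivity),
      Real.sqrt_sq (by norm_num : (0:ℝ) ≤ 5/2)]
  linarith [hgoal, hfin.le, hfin.ge]

theorem stmt6 :
    (∀ ξ θ : ℝ, 0 ≤ ξ → ξ ≤ Real.pi/2 → 0 ≤ θ → θ ≤ Real.pi →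
      q ξ θ ≤ (5/2)*Real.sqrt 22) ∧
    q (Real.arcsin (1/8)) (Real.pi/2) = (5/2)*Real.sqrt 22 := by
  constructor
  · intro ξ θ h1 h2 h3 h4
    have hpi := Real.pi_pos
    have hs0 : 0 ≤ Real.sin ξ :=
      Real.sin_nonneg_of_nonneg_of_le_pi h1 (by linarith)
    have hs1 : Real.sin ξ ≤ 1 := Real.sin_le_one ξ
    have hc : 0 ≤ Real.cos ξ := Real.cos_nonneg_of_mem_Icc ⟨by linarith, h2⟩
    have hcs : Real.cos ξ ^2 = 1 - Real.sin ξ^2 := by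
      nlinarith [Real.sin_sq_add_cos_sq ξ]
    have hu : Real.cos θ^2 ≤ 1 := by
      nlinarith [Real.neg_one_le_cos θ, Real.cos_le_one θ]
    have hsin2 : Real.sin θ^2 = 1 - Real.cos θ^2 := by
      nlinarith [Real.sin_sq_add_cos_sq θ]
    have e1 : hpm 1 ξ θ = (1 - Real.cos θ^2)*(3+Real.sin ξ)^2 +
        (5*Real.cos ξ + 4*Real.cos θ)^2 := by unfold hpm; rw [hsin2]; ring
    have e2 : hpm (-1) ξ θ = (1 - Real.cos θ^2)*(3+Real.sin ξ)^2 +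
        (5*Real.cos ξ - 4*Real.cos θ)^2 := by unfold hpm; rw [hsin2]; ring
    have := key (Real.sin ξ) (Real.cos ξ) (Real.cos θ) hs0 hs1 hc hcs hu
    unfold q
    rw [e1, e2]
    exact this
  · have h18 : (-1:ℝ) ≤ 1/8 := by norm_num
    have h18' : (1:ℝ)/8 ≤ 1 := by norm_num
    have hval : ∀ ε : ℝ, hpm ε (Real.arcsin (1/8)) (Real.pi/2) = 275/8 := by
      intro ε
      unfold hpm
      rw [Real.sin_pi_div_two, Real.cos_pi_div_two, Real.sin_arcsin h18 h18',
        Real.cos_arcsin]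
      have : Real.sqrt (1 - (1/8:ℝ)^2) ^ 2 = 1 - (1/8:ℝ)^2 :=
        Real.sq_sqrt (by norm_num)
      nlinarith [this]
    unfold q
    rw [hval 1, hval (-1)]
    rw [show (275:ℝ)/8 = (5/4)^2 * 22 by norm_num, Real.sqrt_mul (by positivity),
      Real.sqrt_sq (by norm_num : (0:ℝ) ≤ 5/4)]
    ring
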